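/- Let δ, c, ε be constants with 0 < c < δ < 1, 0 < ε < 1, and (1−ε)/ln(1/δ) > (1+ε)/ln(1/c). For each n ≥ 2 let (K_n, λ) be a random simple temporal graph on n vertices, and let k_0(n) = 2 ln n / ln(1/δ). Then the probability that there exists a vertex subset Q of size at least ⌊(1−ε)·k_0(n)⌋ with max{λ_e : e has both endpoints in Q} − min{λ_e : e has both endpoints in Q} ≤ c tends to 0 as n → ∞. (In particular, with high probability every δ-temporal clique Q of size at least ⌊(1−ε)·k_0(n)⌋ has its labels spanning an interval of length greater than c.) -/

import Mathlib

open MeasureTheory ProbabilityTheory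

/-- The edge set of the complete graph `K_n` on vertex set `Fin n`:
unordered pairs of distinct vertices. -/
def EdgeKn (n : ℕ) : Type := {e : Sym2 (Fin n) // ¬ e.IsDiag}

/-- `Q` is a `δ`-temporal clique for the labeling `lam` if any two edges with
both endpoints in `Q` carry labels at most `δ` apart. -/
def IsTemporalClique {n : ℕ} (lam : EdgeKn n → ℝ) (δ : ℝ) (Q : Finset (Fin n)) : Prop :=
  ∀ e e' : EdgeKn n, (∀ v ∈ e.1, v ∈ Q) → (∀ v ∈ e'.1, v ∈ Q) →
    |lam e - lam e'| ≤ δ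

open scoped Classical in
/-- The number of `k`-element vertex subsets of `Fin n` that are `δ`-temporal cliques. -/
noncomputable def cliqueCount {n : ℕ} (lam : EdgeKn n → ℝ) (δ : ℝ) (k : ℕ) : ℕ :=
  ((Finset.univ.powersetCard k).filter (fun Q => IsTemporalClique lam δ Q)).card

open Finset Filter
open scoped ENNReal

instance (n : ℕ) : Fintype (EdgeKn n) := by unfold EdgeKn; infer_instance
instance (n : ℕ) : DecidableEq (EdgeKn n) := by unfold EdgeKn; infer_instance

open scoped Classical in
noncomputable def edgesIn (n : ℕ) (Q : Finset (Fin n)) : Finset (EdgeKn n) :=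
  Finset.univ.filter (fun e => ∀ v ∈ e.1, v ∈ Q)

open scoped Classical in
lemma mem_edgesIn {n : ℕ} {Q : Finset (Fin n)} {e : EdgeKn n} :
    e ∈ edgesIn n Q ↔ ∀ v ∈ e.1, v ∈ Q := by simp [edgesIn]

lemma edgesIn_nonempty {n : ℕ} {Q : Finset (Fin n)} (h : 2 ≤ Q.card) :
    (edgesIn n Q).Nonempty := by
  classical
  obtain ⟨a, ha, b, hb, hab⟩ := Finset.one_lt_card.mp h
  refine ⟨⟨s(a,b), by simpa [Sym2.isDiag_iff_proj_eq] using hab⟩, mem_edgesIn.mpr ?_⟩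
  intro v hv
  rcases Sym2.mem_iff.mp hv with h | h <;> subst h
  exacts [ha, hb]

lemma keyBound {Ω : Type*} [MeasurableSpace Ω] (P : Measure Ω) [IsProbabilityMeasure P]
    {n : ℕ} (lam : EdgeKn n → Ω → ℝ) (hmeas : ∀ e, Measurable (lam e))
    (hindep : iIndepFun lam P)
    (hunif : ∀ e, Measure.map (lam e) P = (volume : Measure ℝ).restrict (Set.Icc 0 1))
    {c c' : ℝ} (hc0 : 0 < c) (hcc' : c < c') (hc'1 : c' ≤ 1)
    {k M T : ℕ} (hk2 : 2 ≤ k)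
    (hM : ∀ Q : Finset (Fin n), Q.card = k → M ≤ (edgesIn n Q).card)
    (hT : ⌊1/(c'-c)⌋₊ ≤ T) :
    P {ω | ∃ Q : Finset (Fin n), k ≤ Q.card ∧
        ∀ e e' : EdgeKn n, (∀ v ∈ e.1, v ∈ Q) → (∀ v ∈ e'.1, v ∈ Q) →
          |lam e ω - lam e' ω| ≤ c}
      ≤ (n : ℝ≥0∞)^k * (T+1) * (ENNReal.ofReal c')^M := by
  classical
  set w : ℝ := c' - c with hw_def
  have hw : 0 < w := by simp [hw_def]; linarith
  set I : ℕ → Set ℝ := fun t => Set.Icc ((t:ℝ)*w) ((t:ℝ)*w + c') with hI_def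
  set G : Finset (Fin n) → ℕ → Set Ω := fun Q t => ⋂ e ∈ edgesIn n Q, lam e ⁻¹' I t with hG_def
  set N : Set Ω := ⋃ e, lam e ⁻¹' (Set.Icc (0:ℝ) 1)ᶜ with hN_def
  set q : ℝ≥0∞ := ENNReal.ofReal c' with hq_def
  -- inclusion
  have hsub : {ω | ∃ Q : Finset (Fin n), k ≤ Q.card ∧
        ∀ e e' : EdgeKn n, (∀ v ∈ e.1, v ∈ Q) → (∀ v ∈ e'.1, v ∈ Q) →
          |lam e ω - lam e' ω| ≤ c}
      ⊆ N ∪ ⋃ Q ∈ (Finset.univ : Finset (Fin n)).powersetCard k,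
            ⋃ t ∈ Finset.range (T+1), G Q t := by
    rintro ω ⟨Q, hQk, hQ⟩
    by_cases hω : ∀ e : EdgeKn n, lam e ω ∈ Set.Icc (0:ℝ) 1
    swap
    · left
      push_neg at hω
      obtain ⟨e, he⟩ := hω
      exact Set.mem_iUnion.mpr ⟨e, he⟩
    right
    obtain ⟨Q', hQ'Q, hQ'card⟩ := Finset.exists_subset_card_eq hQk
    have hne := edgesIn_nonempty (Q := Q') (hQ'card ▸ hk2)
    set labels := (edgesIn n Q').image (fun e => lam e ω) with hlabels
    have hlne : labels.Nonempty := hne.image _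
    set μ : ℝ := labels.min' hlne with hμ_def
    obtain ⟨e₀, he₀, he₀μ⟩ := Finset.mem_image.mp (labels.min'_mem hlne)
    have hμ0 : 0 ≤ μ := by rw [hμ_def, ← he₀μ]; exact (hω e₀).1
    have hμ1 : μ ≤ 1 := by rw [hμ_def, ← he₀μ]; exact (hω e₀).2
    set t : ℕ := ⌊μ / w⌋₊ with ht_def
    have htT : t ≤ T := by
      refine le_trans (Nat.floor_le_floor ?_) hT
      exact div_le_div_of_nonneg_right hμ1 hw.le
    refine Set.mem_iUnion₂.mpr ⟨Q', ?_, Set.mem_iUnion₂.mpr ⟨t, ?_, ?_⟩⟩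
    · simpa [Finset.mem_powersetCard_univ] using hQ'card
    · exact Finset.mem_range.mpr (Nat.lt_succ_of_le htT)
    · refine Set.mem_iInter₂.mpr fun e he => ?_
      have hμle : μ ≤ lam e ω := labels.min'_le _ (Finset.mem_image_of_mem _ he)
      have htw : (t:ℝ) * w ≤ μ := by
        have := Nat.floor_le (a := μ / w) (div_nonneg hμ0 hw.le)
        calc (t:ℝ) * w ≤ (μ / w) * w := by
              exact mul_le_mul_of_nonneg_right this hw.le
          _ = μ := div_mul_cancel₀ μ hw.ne'
      have hμlt : μ < ((t:ℝ) + 1) * w := by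
        have := Nat.lt_floor_add_one (μ / w)
        calc μ = (μ / w) * w := (div_mul_cancel₀ μ hw.ne').symm
          _ < ((t:ℝ) + 1) * w := by
              exact mul_lt_mul_of_pos_right this hw
      have hclose : |lam e ω - lam e₀ ω| ≤ c := by
        refine hQ e e₀ ?_ ?_
        · exact fun v hv => hQ'Q (mem_edgesIn.mp he v hv)
        · exact fun v hv => hQ'Q (mem_edgesIn.mp he₀ v hv)
      have hup : lam e ω ≤ μ + c := by
        have := abs_le.mp hclose
        rw [hμ_def, ← he₀μ]; linarith [this.1]
      constructor
      · exact le_trans htw hμle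
      · calc lam e ω ≤ μ + c := hup
          _ ≤ (t:ℝ) * w + w + c := by linarith
          _ = (t:ℝ) * w + c' := by rw [hw_def]; ring
  -- measure bounds
  have hN0 : P N = 0 := by
    refine measure_iUnion_null fun e => ?_
    have heq : P (lam e ⁻¹' (Set.Icc (0:ℝ) 1)ᶜ)
        = Measure.map (lam e) P (Set.Icc (0:ℝ) 1)ᶜ :=
      (Measure.map_apply (hmeas e) measurableSet_Icc.compl).symm
    rw [heq, hunif, Measure.restrict_apply measurableSet_Icc.compl]
    simp
  have hfac : ∀ (e : EdgeKn n) (t : ℕ), P (lam e ⁻¹' I t) ≤ q := by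
    intro e t
    have heq : P (lam e ⁻¹' I t) = Measure.map (lam e) P (I t) :=
      (Measure.map_apply (hmeas e) measurableSet_Icc).symm
    rw [heq, hunif, Measure.restrict_apply measurableSet_Icc]
    calc volume (I t ∩ Set.Icc 0 1) ≤ volume (I t) := measure_mono Set.inter_subset_left
      _ = ENNReal.ofReal c' := by rw [hI_def]; simp [Real.volume_Icc]
  have hq1 : q ≤ 1 := by
    rw [hq_def]
    exact ENNReal.ofReal_le_one.mpr hc'1
  have hG : ∀ Q ∈ (Finset.univ : Finset (Fin n)).powersetCard k, ∀ t, P (G Q t) ≤ q ^ M := by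
    intro Q hQ t
    have hQcard : Q.card = k := (Finset.mem_powersetCard_univ).mp hQ
    have hprod := (iIndepFun_iff_measure_inter_preimage_eq_mul.mp hindep) (edgesIn n Q)
      (sets := fun _ => I t) (fun i _ => measurableSet_Icc)
    rw [hG_def]
    simp only []
    rw [hprod]
    calc ∏ e ∈ edgesIn n Q, P (lam e ⁻¹' I t)
        ≤ ∏ _e ∈ edgesIn n Q, q := Finset.prod_le_prod' (fun e _ => hfac e t)
      _ = q ^ (edgesIn n Q).card := Finset.prod_const q
      _ ≤ q ^ M := pow_le_pow_of_le_one (by positivity) hq1 (hM Q hQcard)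
  calc P _ ≤ P (N ∪ ⋃ Q ∈ (Finset.univ : Finset (Fin n)).powersetCard k,
            ⋃ t ∈ Finset.range (T+1), G Q t) := measure_mono hsub
    _ ≤ P N + P (⋃ Q ∈ (Finset.univ : Finset (Fin n)).powersetCard k,
            ⋃ t ∈ Finset.range (T+1), G Q t) := measure_union_le _ _
    _ = P (⋃ Q ∈ (Finset.univ : Finset (Fin n)).powersetCard k,
            ⋃ t ∈ Finset.range (T+1), G Q t) := by rw [hN0, zero_add]
    _ ≤ ∑ Q ∈ (Finset.univ : Finset (Fin n)).powersetCard k,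
            P (⋃ t ∈ Finset.range (T+1), G Q t) := measure_biUnion_finset_le _ _
    _ ≤ ∑ Q ∈ (Finset.univ : Finset (Fin n)).powersetCard k,
            ∑ t ∈ Finset.range (T+1), P (G Q t) :=
        Finset.sum_le_sum fun Q _ => measure_biUnion_finset_le _ _
    _ ≤ ∑ Q ∈ (Finset.univ : Finset (Fin n)).powersetCard k,
            ∑ _t ∈ Finset.range (T+1), q ^ M :=
        Finset.sum_le_sum fun Q hQ => Finset.sum_le_sum fun t _ => hG Q hQ t
    _ = ((n.choose k : ℝ≥0∞)) * ((T+1) * q ^ M) := by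
        simp [Finset.sum_const, Finset.card_powersetCard, mul_assoc, mul_comm, mul_left_comm]
    _ ≤ (n : ℝ≥0∞)^k * ((T+1) * q ^ M) := by
        gcongr
        exact_mod_cast Nat.choose_le_pow n k
    _ = (n : ℝ≥0∞)^k * (T+1) * q ^ M := by ring

lemma edgesIn_card {n : ℕ} (Q : Finset (Fin n)) :
    Q.card * Q.card - Q.card ≤ 2 * (edgesIn n Q).card := by
  classical
  have h := Finset.card_le_mul_card_image_of_maps_to
    (f := fun p : Fin n × Fin n => Sym2.mk p.1 p.2) (s := Q.offDiag)
    (t := (edgesIn n Q).image (fun e : EdgeKn n => e.1)) ?_ 2 ?_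
  · rwa [Finset.card_image_of_injective (f := fun e : EdgeKn n => e.1) _ Subtype.val_injective, Finset.offDiag_card] at h
  · intro p hp
    rw [Finset.mem_offDiag] at hp
    refine Finset.mem_image.mpr ⟨⟨Sym2.mk p.1 p.2, ?_⟩, ?_, rfl⟩
    · simpa [Sym2.isDiag_iff_proj_eq] using hp.2.2
    · apply mem_edgesIn.mpr
      intro v hv
      rcases Sym2.mem_iff.mp hv with h | h <;> subst h
      exacts [hp.1, hp.2.1]
  · intro b _
    induction b with
    | _ x y =>
      refine (Finset.card_le_card (t := {(x,y), (y,x)}) ?_).trans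
        (Finset.card_insert_le _ _ |>.trans (by simp))
      intro p hp
      simp only [Finset.mem_filter] at hp
      have := Sym2.eq_iff.mp hp.2
      simp only [Finset.mem_insert, Finset.mem_singleton]
      rcases this with ⟨h1,h2⟩|⟨h1,h2⟩
      · left; exact Prod.ext h1 h2
      · right; exact Prod.ext h1 h2

lemma arith_core (ε α γ lnn K M : ℝ) (hε0 : 0 < ε)
    (hα : 0 < α) (f2 : α * lnn ≤ K + 1) (f3 : 2 * M = K * (K - 1))
    (f4 : γ * α = 2 + ε) (f5 : ε * K ≥ (α + 2 + ε) * 2) (hK2 : 2 ≤ K) :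
    K * lnn - γ * M ≤ -K := by
  nlinarith [mul_le_mul_of_nonneg_left f2 (by linarith : (0:ℝ) ≤ K),
    mul_pos hα (by linarith : (0:ℝ) < K), sq_nonneg K, sq_nonneg (K-1)]

open Filter in
/-- For constants `0 < c < δ < 1` and `ε ∈ (0,1)` with
`(1-ε)/ln(1/δ) > (1+ε)/ln(1/c)`, and `k₀(n) = 2 ln n / ln(1/δ)`, the probability that
some vertex subset `Q` of size at least `⌊(1-ε) k₀(n)⌋` has all the labels of its edges
within an interval of length at most `c` (equivalently, `Q` is a `c`-temporal clique)
tends to `0` as `n → ∞`. -/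
theorem stmt16
    (δ c : ℝ) (hc0 : 0 < c) (hcδ : c < δ) (hδ1 : δ < 1)
    (ε : ℝ) (hε0 : 0 < ε) (hε1 : ε < 1)
    (hgap : (1 - ε) / Real.log (1/δ) > (1 + ε) / Real.log (1/c))
    {Ω : ℕ → Type*} [∀ n, MeasurableSpace (Ω n)]
    (P : ∀ n, Measure (Ω n)) (hP : ∀ n, IsProbabilityMeasure (P n))
    (lam : ∀ n, EdgeKn n → Ω n → ℝ) (hmeas : ∀ n e, Measurable (lam n e))
    (hindep : ∀ n, iIndepFun (lam n) (P n))
    (hunif : ∀ n e, Measure.map (lam n e) (P n) = (volume : Measure ℝ).restrict (Set.Icc 0 1)) :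
    Tendsto
      (fun n =>
        P n {ω | ∃ Q : Finset (Fin n),
          ⌊(1 - ε) * (2 * Real.log n / Real.log (1/δ))⌋₊ ≤ Q.card ∧
          ∀ e e' : EdgeKn n, (∀ v ∈ e.1, v ∈ Q) → (∀ v ∈ e'.1, v ∈ Q) →
            |lam n e ω - lam n e' ω| ≤ c})
      atTop (nhds 0) := by
  classical
  have hδ0 : 0 < δ := hc0.trans hcδ
  have hc1 : c < 1 := hcδ.trans hδ1
  have hε1' : (0:ℝ) < 1 - ε := by linarith
  have hLδ : 0 < Real.log (1/δ) := Real.log_pos (by rw [lt_div_iff₀ hδ0]; linarith)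
  have hLc : 0 < Real.log (1/c) := Real.log_pos (by rw [lt_div_iff₀ hc0]; linarith)
  set L : ℝ := Real.log (1/δ) with hL_def
  set α : ℝ := (1 - ε) * 2 / L with hα_def
  have hα : 0 < α := by positivity
  set γ : ℝ := (1 + ε/2) * L / (1 - ε) with hγ_def
  have hγ0 : 0 < γ := by positivity
  have hγα : γ * α = 2 + ε := by
    rw [hγ_def, hα_def]; field_simp
  set c' : ℝ := Real.exp (-γ) with hc'_def
  have hc'0 : 0 < c' := Real.exp_pos _
  have hc'1 : c' < 1 := Real.exp_lt_one_iff.mpr (by linarith)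
  have hcc' : c < c' := by
    have hmul : (1 + ε) * L < (1 - ε) * Real.log (1/c) := (div_lt_div_iff₀ hLc hLδ).mp hgap
    have hγlt : γ < Real.log (1/c) := by
      rw [hγ_def, div_lt_iff₀ hε1']
      nlinarith
    rw [hc'_def, show c = Real.exp (Real.log c) from (Real.exp_log hc0).symm]
    apply Real.exp_lt_exp.mpr
    rw [one_div, Real.log_inv] at hγlt
    linarith
  set T : ℕ := ⌊1/(c'-c)⌋₊ with hT_def
  set kk : ℕ → ℕ := fun n => ⌊(1 - ε) * (2 * Real.log n / L)⌋₊ with hkk_def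
  set M : ℕ → ℕ := fun n => kk n * (kk n - 1) / 2 with hM_def
  set u : ℕ → ℝ := fun n => (n:ℝ)^(kk n) * ((T:ℝ)+1) * c'^(M n) with hu_def
  -- the key per-n bound
  have key : ∀ n : ℕ, 2 ≤ kk n →
      P n {ω | ∃ Q : Finset (Fin n), kk n ≤ Q.card ∧
        ∀ e e' : EdgeKn n, (∀ v ∈ e.1, v ∈ Q) → (∀ v ∈ e'.1, v ∈ Q) →
          |lam n e ω - lam n e' ω| ≤ c} ≤ ENNReal.ofReal (u n) := by
    intro n hk2
    have hMQ : ∀ Q : Finset (Fin n), Q.card = kk n → M n ≤ (edgesIn n Q).card := by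
      intro Q hQ
      have h1 := edgesIn_card Q
      rw [hQ] at h1
      have h2 : kk n * (kk n - 1) ≤ 2 * (edgesIn n Q).card := by
        have : kk n * (kk n - 1) ≤ kk n * kk n - kk n := by
          rw [mul_comm, Nat.sub_one_mul, mul_comm]
        omega
      calc M n = kk n * (kk n - 1) / 2 := rfl
        _ ≤ 2 * (edgesIn n Q).card / 2 := Nat.div_le_div_right h2
        _ = (edgesIn n Q).card := Nat.mul_div_cancel_left _ (by norm_num)
    have hb := keyBound (P n) (lam n) (hmeas n) (hindep n) (hunif n)
      hc0 hcc' hc'1.le hk2 hMQ (le_refl T)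
    refine hb.trans (le_of_eq ?_)
    simp only [hu_def]
    rw [ENNReal.ofReal_mul (by positivity), ENNReal.ofReal_mul (by positivity),
      ENNReal.ofReal_pow (by positivity), ENNReal.ofReal_pow hc'0.le,
      ENNReal.ofReal_natCast, ENNReal.ofReal_add (by positivity) zero_le_one,
      ENNReal.ofReal_natCast, ENNReal.ofReal_one]
  -- limits
  have hlog : Tendsto (fun n : ℕ => Real.log n) atTop atTop :=
    Real.tendsto_log_atTop.comp tendsto_natCast_atTop_atTop
  have harg : Tendsto (fun n : ℕ => (1 - ε) * (2 * Real.log n / L)) atTop atTop := by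
    apply Tendsto.const_mul_atTop hε1'
    have heq : (fun n : ℕ => 2 * Real.log n / L) = fun n : ℕ => Real.log n * (2 / L) := by
      funext n; ring
    rw [heq]
    exact hlog.atTop_mul_const (by positivity)
  have hkk : Tendsto kk atTop atTop := by
    rw [hkk_def]; exact tendsto_nat_floor_atTop.comp harg
  have hexp : Tendsto (fun n : ℕ => ((T:ℝ)+1) * Real.exp (-(kk n : ℝ))) atTop (nhds 0) := by
    rw [show (0:ℝ) = ((T:ℝ)+1) * 0 by ring]
    apply Tendsto.const_mul
    exact Real.tendsto_exp_atBot.comp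
      (tendsto_neg_atTop_atBot.comp (tendsto_natCast_atTop_atTop.comp hkk))
  set K0 : ℕ := ⌈(α + 2 + ε) * 2 / ε⌉₊ with hK0_def
  have hev : ∀ᶠ n in atTop, u n ≤ ((T:ℝ)+1) * Real.exp (-(kk n : ℝ)) := by
    filter_upwards [eventually_ge_atTop 1, hkk.eventually_ge_atTop K0,
      hkk.eventually_ge_atTop 2] with n hn1 hnK hn2
    have hn0 : (0:ℝ) < (n:ℝ) := by exact_mod_cast hn1.trans_lt' Nat.zero_lt_one
    have hlnn : 0 ≤ Real.log n := Real.log_nonneg (by exact_mod_cast hn1)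
    set K : ℝ := (kk n : ℝ) with hK_def
    have hK2 : (2:ℝ) ≤ K := by rw [hK_def]; exact_mod_cast hn2
    have f2 : α * Real.log n ≤ K + 1 := by
      have h := Nat.lt_floor_add_one ((1 - ε) * (2 * Real.log n / L))
      have heq : α * Real.log n = (1 - ε) * (2 * Real.log n / L) := by
        rw [hα_def]; ring
      rw [heq]
      exact le_of_lt h
    have hdvd : 2 ∣ kk n * (kk n - 1) := by
      rw [mul_comm]
      have h := Nat.even_mul_succ_self (kk n - 1)
      have hk1 : kk n - 1 + 1 = kk n := by omega
      rw [hk1] at h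
      rwa [even_iff_two_dvd] at h
    have h2M : 2 * M n = kk n * (kk n - 1) := Nat.mul_div_cancel' hdvd
    have f3 : 2 * ((M n : ℝ)) = K * (K - 1) := by
      have := congrArg (Nat.cast : ℕ → ℝ) h2M
      push_cast [Nat.cast_sub (by omega : 1 ≤ kk n)] at this
      rw [hK_def]; linarith
    have f5 : ε * K ≥ (α + 2 + ε) * 2 := by
      have h1 : ((α + 2 + ε) * 2 / ε) ≤ K := by
        refine le_trans (Nat.le_ceil _) ?_
        rw [← hK0_def, hK_def]
        exact_mod_cast hnK
      have := (div_le_iff₀ hε0).mp h1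
      linarith
    have harith : K * Real.log n - γ * (M n : ℝ) ≤ -K :=
      arith_core ε α γ (Real.log n) K (M n) hε0 hα f2 f3 hγα f5 hK2
    have hpow : (n:ℝ) ^ (kk n) = Real.exp (K * Real.log n) := by
      rw [hK_def, Real.exp_nat_mul, Real.exp_log hn0]
    have hpowc : c' ^ (M n) = Real.exp (-(γ * (M n : ℝ))) := by
      rw [hc'_def, ← Real.exp_nat_mul]
      congr 1
      ring
    simp only [hu_def]
    rw [hpow, hpowc]
    calc Real.exp (K * Real.log n) * ((T:ℝ)+1) * Real.exp (-(γ * (M n : ℝ)))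
        = ((T:ℝ)+1) * Real.exp (K * Real.log n - γ * (M n : ℝ)) := by
          rw [show K * Real.log n - γ * (M n : ℝ)
              = K * Real.log n + -(γ * (M n : ℝ)) by ring, Real.exp_add]
          ring
      _ ≤ ((T:ℝ)+1) * Real.exp (-K) := by
          gcongr
  have hu0 : Tendsto u atTop (nhds 0) :=
    tendsto_of_tendsto_of_tendsto_of_le_of_le' tendsto_const_nhds hexp
      (Eventually.of_forall fun n => by simp only [hu_def]; positivity) hev
  have hofReal : Tendsto (fun n => ENNReal.ofReal (u n)) atTop (nhds 0) := by
    have := ENNReal.tendsto_ofReal hu0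
    simpa using this
  refine tendsto_of_tendsto_of_tendsto_of_le_of_le' tendsto_const_nhds hofReal
    (Eventually.of_forall fun n => zero_le) ?_
  filter_upwards [hkk.eventually_ge_atTop 2] with n hn2
  exact key n hn2
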